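/- Let n ≥ 1 be an integer that is not a perfect square and let χ be a Dirichlet character modulo n with χ(−1) = 1. Then for every complex s with Re(s) < 0, the series K(1−s, χ) = Σ_{q=1}^∞ τ(χ, q)·q^{−(1−s)} converges absolutely, and L(s, χ) = (π^{s−1/2} / n^{s}) · (Γ((1−s)/2) / Γ(s/2)) · K(1−s, χ), where L(s, χ) denotes the analytic continuation of the Dirichlet L-function Σ_{m≥1} χ(m) m^{−s}. -/

import Mathlib

open Complex

/-- The Gauss sum `τ(χ, q) = ∑_{j=0}^{n-1} χ(j) e(jq/n)` of a function `χ` regarded as a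
character modulo `n`, at the integer `q`, where `e(z) = exp(2πiz)`. -/
noncomputable def tauChar (n : ℕ) (χ : ℕ → ℂ) (q : ℤ) : ℂ :=
  ∑ j ∈ Finset.range n, χ j * Complex.exp (2 * Real.pi * Complex.I * j * q / n)

private lemma gamma_aux (s : ℂ) (hs : s.re < 0) :
    Complex.Gamma ((1 - s) / 2) / Complex.Gamma (s / 2) =
      Complex.Gamma (1 - s) * (2 : ℂ) ^ s * (Real.sqrt Real.pi : ℂ) *
        Complex.sin (Real.pi * s / 2) / (Real.pi : ℂ) := by
  have hne : Complex.Gamma (1 - s / 2) ≠ 0 := by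
    apply Complex.Gamma_ne_zero
    intro m h
    have hre := congrArg Complex.re h
    have h2 : (s / 2).re = s.re / 2 := by
      rw [show s / 2 = s * (1/2 : ℝ) from by push_cast; ring]
      simp [Complex.mul_re]; ring
    rw [Complex.sub_re, Complex.one_re, h2, Complex.neg_re, Complex.natCast_re] at hre
    have hm : (0:ℝ) ≤ (m:ℝ) := Nat.cast_nonneg m
    linarith
  have hdup := Complex.Gamma_mul_Gamma_add_half ((1 - s) / 2)
  rw [show (1 - s) / 2 + 1 / 2 = 1 - s / 2 by ring, show 2 * ((1 - s) / 2) = 1 - s by ring,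
    show (1:ℂ) - (1 - s) = s by ring] at hdup
  have hrefl := Complex.Gamma_mul_Gamma_one_sub (s / 2)
  have hG : Complex.Gamma ((1 - s) / 2) =
      Complex.Gamma (1 - s) * (2:ℂ) ^ s * (Real.sqrt Real.pi : ℂ) / Complex.Gamma (1 - s / 2) := by
    rw [eq_div_iff hne, mul_comm]
    rw [← hdup]; ring
  rw [hG, div_div, mul_comm (Complex.Gamma (1 - s / 2)), hrefl,
    show (Real.pi : ℂ) * (s / 2) = Real.pi * s / 2 by ring, div_div_eq_mul_div]

private lemma sum_zmod_eq (n : ℕ) [NeZero n] (F : ZMod n → ℂ) :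
    ∑ j : ZMod n, F j = ∑ i ∈ Finset.range n, F (i : ZMod n) :=
  Finset.sum_bij' (fun (j : ZMod n) _ => j.val) (fun i _ => (i : ZMod n))
    (fun j _ => Finset.mem_range.mpr (ZMod.val_lt j)) (fun i _ => Finset.mem_univ _)
    (fun j _ => ZMod.natCast_zmod_val j)
    (fun i hi => ZMod.val_natCast_of_lt (Finset.mem_range.mp hi))
    (fun j _ => by rw [ZMod.natCast_zmod_val])

private lemma dft_eq_tau (n : ℕ) [NeZero n] (χ : DirichletCharacter ℂ n) (hχ : χ (-1) = 1)
    (q : ℕ) :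
    ZMod.dft (fun j : ZMod n => χ j) (q : ZMod n) = tauChar n (fun j => χ (j : ZMod n)) q := by
  have heven : ∀ x : ZMod n, χ (-x) = χ x := fun x => by
    rw [show (-x : ZMod n) = -1 * x by ring, map_mul, hχ, one_mul]
  rw [ZMod.dft_apply]
  rw [show (∑ j : ZMod n, ZMod.stdAddChar (-(j * (q : ZMod n))) • χ j)
      = ∑ j : ZMod n, ZMod.stdAddChar (j * (q : ZMod n)) • χ j from
    Fintype.sum_equiv (Equiv.neg _) _ _ (fun j => by
      simp only [Equiv.neg_apply, neg_mul, neg_neg, heven])]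
  rw [sum_zmod_eq]
  refine Finset.sum_congr rfl fun i hi => ?_
  rw [smul_eq_mul, mul_comm]
  congr 1
  rw [show ((i : ZMod n) * (q : ZMod n)) = (((i * q : ℕ) : ℤ) : ZMod n) by push_cast; ring,
    ZMod.stdAddChar_coe]
  congr 1
  push_cast
  ring

theorem functional_equation_nonsquare_modulus (n : ℕ) (hn : 0 < n) (hsq : ¬ IsSquare n)
    (χ : DirichletCharacter ℂ n) (hχ : χ (-1) = 1) (s : ℂ) (hs : s.re < 0) :
    Summable (fun q : ℕ => ‖tauChar n (fun j => χ (j : ZMod n)) q / (q : ℂ) ^ (1 - s)‖) ∧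
    (haveI : NeZero n := ⟨hn.ne'⟩; DirichletCharacter.LFunction χ s) =
      (Real.pi : ℂ) ^ (s - 1 / 2) / (n : ℂ) ^ s *
        (Complex.Gamma ((1 - s) / 2) / Complex.Gamma (s / 2)) *
        ∑' q : ℕ, tauChar n (fun j => χ (j : ZMod n)) q / (q : ℂ) ^ (1 - s) := by
  haveI : NeZero n := ⟨hn.ne'⟩
  have hw1 : 1 < (1 - s).re := by
    rw [Complex.sub_re, Complex.one_re]; linarith
  have hw0 : (1 : ℂ) - s ≠ 0 := by
    intro h
    have := congrArg Complex.re h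
    rw [Complex.sub_re, Complex.one_re, Complex.zero_re] at this
    linarith
  -- Summability
  have hτbound : ∀ q : ℕ, ‖tauChar n (fun j => χ (j : ZMod n)) q‖ ≤ n := by
    intro q
    refine (norm_sum_le _ _).trans ?_
    calc ∑ j ∈ Finset.range n, ‖χ (j : ZMod n) * Complex.exp (2 * Real.pi * I * j * q / n)‖
        ≤ ∑ j ∈ Finset.range n, 1 := by
          refine Finset.sum_le_sum fun j _ => ?_
          rw [norm_mul, show (2 * (Real.pi : ℂ) * I * j * q / n)
              = ((2 * Real.pi * j * q / n : ℝ) : ℂ) * I from by push_cast; ring]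
          rw [show ‖Complex.exp (((2 * Real.pi * j * q / n : ℝ) : ℂ) * I)‖
              = ‖Complex.exp (((2 * Real.pi * j * q / n : ℝ) : ℂ) * I)‖ from rfl,
            Complex.norm_exp_ofReal_mul_I, mul_one]
          exact χ.norm_le_one _
      _ = n := by simp
  have hsum : Summable
      (fun q : ℕ => ‖tauChar n (fun j => χ (j : ZMod n)) q / (q : ℂ) ^ (1 - s)‖) := by
    refine Summable.of_nonneg_of_le (fun q => norm_nonneg _) (fun q => ?_)
      (((Real.summable_nat_rpow_inv.mpr hw1).mul_left (n : ℝ)))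
    rcases Nat.eq_zero_or_pos q with rfl | hq
    · simp only [Nat.cast_zero, zero_cpow hw0, div_zero, norm_zero]
      positivity
    · rw [norm_div, Complex.norm_natCast_cpow_of_pos hq, div_eq_mul_inv]
      have hp : (0:ℝ) < (q : ℝ) ^ (1 - s).re :=
        Real.rpow_pos_of_pos (Nat.cast_pos.mpr hq) _
      exact mul_le_mul_of_nonneg_right (hτbound q) (inv_nonneg.mpr hp.le)
  refine ⟨hsum, ?_⟩
  -- Functional equation
  set Φ : ZMod n → ℂ := fun j => χ j with hΦ
  have heven : ∀ x : ZMod n, χ (-x) = χ x := fun x => by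
    rw [show (-x : ZMod n) = -1 * x by ring, map_mul, hχ, one_mul]
  have hΦneg : (fun x : ZMod n => Φ (-x)) = Φ := funext heven
  have hT : ZMod.LFunction (ZMod.dft Φ) (1 - s)
      = ∑' q : ℕ, tauChar n (fun j => χ (j : ZMod n)) q / (q : ℂ) ^ (1 - s) := by
    rw [ZMod.LFunction_eq_LSeries _ hw1, LSeries]
    exact tsum_congr fun q => by
      rw [LSeries.term_of_ne_zero' hw0, dft_eq_tau n χ hχ q]
  have hkey := ZMod.LFunction_one_sub Φ (s := 1 - s)
    (fun m h => by
      have hre := congrArg Complex.re h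
      rw [Complex.sub_re, Complex.one_re, Complex.neg_re, Complex.natCast_re] at hre
      have hm : (0:ℝ) ≤ (m:ℝ) := Nat.cast_nonneg m
      linarith)
    (Or.inr (fun h => by
      have hre := congrArg Complex.re h
      simp only [Complex.sub_re, Complex.one_re] at hre
      linarith))
  rw [show (1 : ℂ) - (1 - s) = s by ring, hΦneg, hT] at hkey
  show ZMod.LFunction Φ s = _
  rw [hkey]
  -- reduce to scalar identity
  set T := ∑' q : ℕ, tauChar n (fun j => χ (j : ZMod n)) q / (q : ℂ) ^ (1 - s) with hTdef
  have hexp : Complex.exp ((Real.pi : ℂ) * I * (1 - s) / 2)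
        + Complex.exp (-(Real.pi : ℂ) * I * (1 - s) / 2)
      = 2 * Complex.sin ((Real.pi : ℂ) * s / 2) := by
    rw [show ((Real.pi : ℂ) * I * (1 - s) / 2) = ((Real.pi : ℂ)/2 - Real.pi * s/2) * I by ring,
      show (-(Real.pi : ℂ) * I * (1 - s) / 2) = (-((Real.pi : ℂ)/2 - Real.pi * s/2)) * I by ring,
      Complex.exp_mul_I, Complex.exp_mul_I, Complex.cos_neg, Complex.sin_neg,
      ← Complex.cos_pi_div_two_sub ((Real.pi : ℂ) * s / 2)]
    ring
  have hscalar : (n : ℂ) ^ ((1 - s) - 1) * (2 * (Real.pi : ℂ)) ^ (-(1 - s))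
        * Complex.Gamma (1 - s)
        * (Complex.exp ((Real.pi : ℂ) * I * (1 - s) / 2)
          + Complex.exp (-(Real.pi : ℂ) * I * (1 - s) / 2))
      = (Real.pi : ℂ) ^ (s - 1 / 2) / (n : ℂ) ^ s
        * (Complex.Gamma ((1 - s) / 2) / Complex.Gamma (s / 2)) := by
    rw [hexp, gamma_aux s hs]
    have hπ0 : (Real.pi : ℂ) ≠ 0 := Complex.ofReal_ne_zero.mpr Real.pi_ne_zero
    have hn0 : (n : ℂ) ≠ 0 := Nat.cast_ne_zero.mpr hn.ne'
    have h20 : (2 : ℂ) ≠ 0 := two_ne_zero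
    have hsπ : ((Real.sqrt Real.pi : ℝ) : ℂ) ≠ 0 :=
      Complex.ofReal_ne_zero.mpr (Real.sqrt_pos.mpr Real.pi_pos).ne'
    have hns : (n : ℂ) ^ s ≠ 0 := by
      simp [Complex.cpow_eq_zero_iff, hn0]
    have hmul : (2 * (Real.pi : ℂ)) ^ (s - 1) = (2:ℂ) ^ (s - 1) * (Real.pi : ℂ) ^ (s - 1) := by
      rw [show (2 * (Real.pi : ℂ)) = ((2:ℝ):ℂ) * ((Real.pi : ℝ):ℂ) by norm_num]
      rw [Complex.mul_cpow_ofReal_nonneg (by norm_num) Real.pi_pos.le]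
      norm_num
    have hsqrt : (Real.pi : ℂ) ^ (1/2 : ℂ) = ((Real.sqrt Real.pi : ℝ) : ℂ) := by
      rw [show ((1:ℂ)/2) = ((1/2 : ℝ):ℂ) by norm_num, ← Complex.ofReal_cpow Real.pi_pos.le,
        ← Real.sqrt_eq_rpow]
    rw [show ((1 - s) - 1 : ℂ) = -s by ring, Complex.cpow_neg,
      show (-(1 - s) : ℂ) = s - 1 by ring, hmul,
      Complex.cpow_sub _ _ h20, Complex.cpow_sub _ _ hπ0, Complex.cpow_one, Complex.cpow_one,
      show (s - 1/2 : ℂ) = s - 1/2 by ring, Complex.cpow_sub _ _ hπ0, hsqrt]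
    field_simp
  calc (n : ℂ) ^ ((1 - s) - 1) * (2 * (Real.pi : ℂ)) ^ (-(1 - s)) * Complex.Gamma (1 - s) *
        (Complex.exp ((Real.pi : ℂ) * I * (1 - s) / 2) * T
          + Complex.exp (-(Real.pi : ℂ) * I * (1 - s) / 2) * T)
      = ((n : ℂ) ^ ((1 - s) - 1) * (2 * (Real.pi : ℂ)) ^ (-(1 - s)) * Complex.Gamma (1 - s) *
        (Complex.exp ((Real.pi : ℂ) * I * (1 - s) / 2)
          + Complex.exp (-(Real.pi : ℂ) * I * (1 - s) / 2))) * T := by ring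
    _ = _ := by rw [hscalar]
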